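/- Suppose a cost function L : ℝ × ℝ → ℝ decomposes as L(r₁,r₂) = f₁(r₁) + f₂(r₂) − h₁(r₁)h₂(r₂), and define the tensor M_{i,j,i',j'} = L(C^X_{i,i'}, C^Y_{j,j'}) from matrices C^X ∈ ℝ^{n×n} and C^Y ∈ ℝ^{m×m}. Then for every γ ∈ ℝ^{n×m}, M∘γ = f₁(C^X)·γ₁·1ₘᵀ + 1ₙ·γ₂ᵀ·f₂(C^Y) − h₁(C^X)·γ·h₂(C^Y)ᵀ, where γ₁ = γ1ₘ, γ₂ = γᵀ1ₙ, and f(C) denotes entrywise application of f to the matrix C. -/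
import Mathlib

/-- Tensor-matrix product: `(M ∘ γ)_{ij} = ∑_{i',j'} M_{i,j,i',j'} γ_{i',j'}`. -/
def tmul {n m : ℕ} (M : Fin n → Fin m → Fin n → Fin m → ℝ)
    (γ : Fin n → Fin m → ℝ) : Fin n → Fin m → ℝ :=
  fun i j => ∑ i', ∑ j', M i j i' j' * γ i' j'

theorem stmt_6 {n m : ℕ} (f₁ f₂ h₁ h₂ : ℝ → ℝ)
    (CX : Fin n → Fin n → ℝ) (CY : Fin m → Fin m → ℝ)
    (γ : Fin n → Fin m → ℝ) (i : Fin n) (j : Fin m) :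
    tmul (fun i j i' j' => f₁ (CX i i') + f₂ (CY j j') - h₁ (CX i i') * h₂ (CY j j')) γ i j
      = (∑ i', f₁ (CX i i') * (∑ j', γ i' j'))
        + (∑ j', (∑ i', γ i' j') * f₂ (CY j j'))
        - ∑ i', ∑ j', h₁ (CX i i') * γ i' j' * h₂ (CY j j') := by
  simp only [tmul, sub_mul, add_mul, Finset.sum_sub_distrib, Finset.sum_add_distrib,
    Finset.mul_sum, Finset.sum_mul]
  congr 1
  · congr 1
    rw [Finset.sum_comm]
    exact Finset.sum_congr rfl fun _ _ => Finset.sum_congr rfl fun _ _ => mul_comm _ _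
  · refine Finset.sum_congr rfl fun i' _ => Finset.sum_congr rfl fun j' _ => ?_
    ring
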